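/- arXiv:1807.06109 — 5 statements merged into one kernel-verified Lean document; each statement's English description precedes it below -/
import Mathlib

section
/- Let θ ∈ (1,2), Θ = 1/(2−θ), and let minmod(a,b,c) denote the number of smallest absolute value in the convex hull of {a,b,c} (in particular minmod(a,b,c) = 0 if the arguments do not all have the same sign, and otherwise equals the argument of smallest absolute value when all have the same sign). Given nonnegative values w_{i−1}, w_i, w_{i+1}, w_{i+2} ≥ 0 and slopes s_j = minmod(θ(w_{j+1}−w_j)/Δx, (w_{j+1}−w_{j−1})/(2Δx), θ(w_j−w_{j−1})/Δx), define D(w)_i = (1/Δx⁴)((w_{i+1} − (Δx/2)s_{i+1}) − (w_i + (Δx/2)s_i) − (w_i − (Δx/2)s_i) + (w_{i−1} + (Δx/2)s_{i−1})). Then in the case w_{i+1} ≥ w_i ≥ w_{i−1}, one has Δx⁴ D(w)_i ≥ (1 − θ/2)w_{i+1} − (2 − θ/2)w_i + w_{i−1}. -/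
/-- The minmod limiter: the real number of smallest absolute value in the convex
hull of the three arguments. -/
noncomputable def minmod (a b c : ℝ) : ℝ :=
  if 0 < min a (min b c) then min a (min b c)
  else if max a (max b c) < 0 then max a (max b c)
  else 0

/-- The minmod slope s_j. -/
noncomputable def slopeMM (θ Δx : ℝ) (w : ℤ → ℝ) (j : ℤ) : ℝ :=
  minmod (θ * (w (j + 1) - w j) / Δx) ((w (j + 1) - w (j - 1)) / (2 * Δx))
    (θ * (w j - w (j - 1)) / Δx)

/-- The artificial dissipation operator D(w)_i. -/
noncomputable def Dop (θ Δx : ℝ) (w : ℤ → ℝ) (i : ℤ) : ℝ :=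
  (1 / Δx ^ 4) *
    ((w (i + 1) - Δx / 2 * slopeMM θ Δx w (i + 1)) - (w i + Δx / 2 * slopeMM θ Δx w i)
      - (w i - Δx / 2 * slopeMM θ Δx w i) + (w (i - 1) + Δx / 2 * slopeMM θ Δx w (i - 1)))

lemma minmod_nonneg (a b c : ℝ) (ha : 0 ≤ a) : 0 ≤ minmod a b c := by
  unfold minmod
  split_ifs with h1 h2
  · exact le_of_lt h1
  · exact absurd (lt_of_le_of_lt (le_max_left _ _) h2) (not_lt.mpr ha)
  · rfl

lemma minmod_le_right (a b c : ℝ) (hc : 0 ≤ c) : minmod a b c ≤ c := by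
  unfold minmod
  split_ifs with h1 h2
  · exact le_trans (min_le_right _ _) (min_le_right _ _)
  · exact absurd (lt_of_le_of_lt (le_max_of_le_right (le_max_right _ _)) h2) (not_lt.mpr hc)
  · exact hc

/-- in the case w_{i+1} ≥ w_i ≥ w_{i−1}, with nonnegative data,
Δx⁴ D(w)_i ≥ (1 − θ/2)w_{i+1} − (2 − θ/2)w_i + w_{i−1}. -/
theorem stmt_3 (θ Δx : ℝ) (w : ℤ → ℝ) (i : ℤ)
    (hθ1 : 1 < θ) (hθ2 : θ < 2) (hΔx : 0 < Δx)
    (hw : ∀ j : ℤ, i - 1 ≤ j → j ≤ i + 2 → 0 ≤ w j)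
    (h1 : w i ≤ w (i + 1)) (h2 : w (i - 1) ≤ w i) :
    Δx ^ 4 * Dop θ Δx w i ≥ (1 - θ / 2) * w (i + 1) - (2 - θ / 2) * w i + w (i - 1) := by
  have hA : 0 ≤ slopeMM θ Δx w (i - 1) := by
    apply minmod_nonneg
    have : (0:ℝ) ≤ θ * (w (i - 1 + 1) - w (i - 1)) := by
      have : w (i - 1) ≤ w (i - 1 + 1) := by simpa using h2
      nlinarith
    positivity
  have hB : slopeMM θ Δx w (i + 1) ≤ θ * (w (i + 1) - w i) / Δx := by
    have h3 : w (i + 1 - 1) = w i := by norm_num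
    have : slopeMM θ Δx w (i + 1) ≤ θ * (w (i + 1) - w (i + 1 - 1)) / Δx := by
      apply minmod_le_right
      rw [h3]
      have : (0:ℝ) ≤ θ * (w (i + 1) - w i) := by nlinarith
      positivity
    rwa [h3] at this
  unfold Dop
  have hΔx4 : Δx ^ 4 ≠ 0 := by positivity
  rw [ge_iff_le, show Δx ^ 4 * ((1 / Δx ^ 4) *
    ((w (i + 1) - Δx / 2 * slopeMM θ Δx w (i + 1)) - (w i + Δx / 2 * slopeMM θ Δx w i)
      - (w i - Δx / 2 * slopeMM θ Δx w i) + (w (i - 1) + Δx / 2 * slopeMM θ Δx w (i - 1)))) =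
    (w (i + 1) - Δx / 2 * slopeMM θ Δx w (i + 1)) - (w i + Δx / 2 * slopeMM θ Δx w i)
      - (w i - Δx / 2 * slopeMM θ Δx w i) + (w (i - 1) + Δx / 2 * slopeMM θ Δx w (i - 1))
    from by field_simp]
  have hB' : Δx / 2 * slopeMM θ Δx w (i + 1) ≤ θ * (w (i + 1) - w i) / 2 := by
    have := mul_le_mul_of_nonneg_left hB (by positivity : (0:ℝ) ≤ Δx / 2)
    calc Δx / 2 * slopeMM θ Δx w (i + 1) ≤ Δx / 2 * (θ * (w (i + 1) - w i) / Δx) := this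
      _ = θ * (w (i + 1) - w i) / 2 := by field_simp
  nlinarith [mul_nonneg (by positivity : (0:ℝ) ≤ Δx / 2) hA]
end

section
/- Let θ ∈ (1,2), Θ = 1/(2−θ), and let w_{i−2}, w_{i−1}, w_i, w_{i+1}, w_{i+2} ≥ 0 with minmod slopes as above. Then the artificial dissipation operator satisfies Δx⁴ D(w)_i ≥ (1/2)((1/Θ) w_{i+1} − 4 w_i + (1/Θ) w_{i−1}). -/
lemma minmod_le_max_c (a b c : ℝ) : minmod a b c ≤ max c 0 := by
  unfold minmod
  split_ifs with h1 h2
  · exact le_max_of_le_left (le_trans (min_le_right _ _) (min_le_right _ _))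
  · exact le_max_of_le_right h2.le
  · exact le_max_right _ _

lemma min_a_le_minmod (a b c : ℝ) : min a 0 ≤ minmod a b c := by
  unfold minmod
  split_ifs with h1 h2
  · exact min_le_of_right_le h1.le
  · exact min_le_of_left_le (le_max_left _ _)
  · exact min_le_right _ _

/-- full lower bound on the minmod-limited artificial dissipation operator:
Δx⁴ D(w)_i ≥ (1/2)((1/Θ) w_{i+1} − 4 w_i + (1/Θ) w_{i−1}) with Θ = 1/(2−θ). -/
theorem stmt_4 (θ Θ Δx : ℝ) (w : ℤ → ℝ) (i : ℤ)
    (hθ1 : 1 < θ) (hθ2 : θ < 2) (hΘ : Θ = 1 / (2 - θ)) (hΔx : 0 < Δx)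
    (hw : ∀ j : ℤ, i - 2 ≤ j → j ≤ i + 2 → 0 ≤ w j) :
    Δx ^ 4 * Dop θ Δx w i ≥ (1 / 2) * ((1 / Θ) * w (i + 1) - 4 * w i + (1 / Θ) * w (i - 1)) := by
  have hΔne : Δx ≠ 0 := ne_of_gt hΔx
  have hwm1 : 0 ≤ w (i - 1) := hw _ (by omega) (by omega)
  have hwi : 0 ≤ w i := hw _ (by omega) (by omega)
  have hwp1 : 0 ≤ w (i + 1) := hw _ (by omega) (by omega)
  have hθpos : (0:ℝ) < θ := by linarith
  -- bound on s_{i+1}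
  have h1 : slopeMM θ Δx w (i + 1) ≤ θ * w (i + 1) / Δx := by
    rw [slopeMM]
    have he : i + 1 - 1 = i := by ring
    rw [he]
    refine le_trans (minmod_le_max_c _ _ _) (max_le ?_ ?_)
    · gcongr
      nlinarith
    · positivity
  -- bound on s_{i-1}
  have h2 : -(θ * w (i - 1) / Δx) ≤ slopeMM θ Δx w (i - 1) := by
    rw [slopeMM]
    have he : i - 1 + 1 = i := by ring
    rw [he]
    refine le_trans (le_min ?_ ?_) (min_a_le_minmod _ _ _)
    · rw [← neg_div]
      gcongr
      nlinarith
    · simp only [neg_nonpos]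
      positivity
  have hΘval : 1 / Θ = 2 - θ := by rw [hΘ]; field_simp
  rw [hΘval]
  unfold Dop
  have hkey : Δx ^ 4 * ((1 / Δx ^ 4) *
      ((w (i + 1) - Δx / 2 * slopeMM θ Δx w (i + 1)) - (w i + Δx / 2 * slopeMM θ Δx w i)
      - (w i - Δx / 2 * slopeMM θ Δx w i) + (w (i - 1) + Δx / 2 * slopeMM θ Δx w (i - 1))))
      = w (i + 1) + w (i - 1) - 2 * w i
        - Δx / 2 * slopeMM θ Δx w (i + 1) + Δx / 2 * slopeMM θ Δx w (i - 1) := by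
    field_simp
    ring
  rw [hkey]
  have b1 : Δx / 2 * slopeMM θ Δx w (i + 1) ≤ θ * w (i + 1) / 2 := by
    have := mul_le_mul_of_nonneg_left h1 (by positivity : (0:ℝ) ≤ Δx / 2)
    calc Δx / 2 * slopeMM θ Δx w (i + 1) ≤ Δx / 2 * (θ * w (i + 1) / Δx) := this
      _ = θ * w (i + 1) / 2 := by field_simp
  have b2 : -(θ * w (i - 1) / 2) ≤ Δx / 2 * slopeMM θ Δx w (i - 1) := by
    have := mul_le_mul_of_nonneg_left h2 (by positivity : (0:ℝ) ≤ Δx / 2)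
    calc -(θ * w (i - 1) / 2) = Δx / 2 * (-(θ * w (i - 1) / Δx)) := by field_simp
      _ ≤ _ := this
  nlinarith
end

section
/- Let ε > 0, σ_s^min > 0, Δx, Δy > 0, θ ∈ (1,2), Θ = 1/(2−θ), and γ_max = ε²/(ε² + σ_s^min Δt). If 0 < Δt ≤ σ_s^min · Δx²Δy² / ((2+Θ²)Δx² + (1/2 + 2Θ²)ΔxΔy + (2+Θ²)Δy²), then 1 − γ_max (2ΘΔt/(εΔx) + 2ΘΔt/(εΔy) + 2Δt²/(ε²Δx²) + Δt²/(2ε²ΔxΔy) + 2Δt²/(ε²Δy²)) ≥ 0. -/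
/-- parabolic CFL: if Δt ≤ Δt_par, then condition (C7) holds, i.e.
1 − γ_max (2ΘΔt/(εΔx) + 2ΘΔt/(εΔy) + 2Δt²/(ε²Δx²) + Δt²/(2ε²ΔxΔy) + 2Δt²/(ε²Δy²)) ≥ 0. -/
theorem stmt_5 (ε σsmin Δx Δy θ Θ Δt : ℝ)
    (hε : 0 < ε) (hσ : 0 < σsmin) (hΔx : 0 < Δx) (hΔy : 0 < Δy)
    (hθ1 : 1 < θ) (hθ2 : θ < 2) (hΘ : Θ = 1 / (2 - θ))
    (hΔt0 : 0 < Δt)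
    (hΔt : Δt ≤ σsmin * (Δx ^ 2 * Δy ^ 2) /
      ((2 + Θ ^ 2) * Δx ^ 2 + (1 / 2 + 2 * Θ ^ 2) * (Δx * Δy) + (2 + Θ ^ 2) * Δy ^ 2)) :
    1 - ε ^ 2 / (ε ^ 2 + σsmin * Δt) *
        (2 * Θ * Δt / (ε * Δx) + 2 * Θ * Δt / (ε * Δy) + 2 * Δt ^ 2 / (ε ^ 2 * Δx ^ 2)
          + Δt ^ 2 / (2 * ε ^ 2 * Δx * Δy) + 2 * Δt ^ 2 / (ε ^ 2 * Δy ^ 2)) ≥ 0 := by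
  have hD : 0 < (2 + Θ ^ 2) * Δx ^ 2 + (1 / 2 + 2 * Θ ^ 2) * (Δx * Δy)
      + (2 + Θ ^ 2) * Δy ^ 2 := by positivity
  have key : Δt * ((2 + Θ ^ 2) * Δx ^ 2 + (1 / 2 + 2 * Θ ^ 2) * (Δx * Δy)
      + (2 + Θ ^ 2) * Δy ^ 2) ≤ σsmin * (Δx ^ 2 * Δy ^ 2) := (le_div_iff₀ hD).mp hΔt
  have hden : 0 < ε ^ 2 + σsmin * Δt := by positivity
  rw [ge_iff_le, sub_nonneg, div_mul_eq_mul_div, div_le_one hden]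
  rw [div_add_div _ _ (by positivity) (by positivity), div_add_div _ _ (by positivity) (by positivity),
    div_add_div _ _ (by positivity) (by positivity), div_add_div _ _ (by positivity) (by positivity)]
  rw [← mul_div_assoc, div_le_iff₀ (by positivity)]
  have key2 : Δt * (Δt * ((2 + Θ ^ 2) * Δx ^ 2 + (1 / 2 + 2 * Θ ^ 2) * (Δx * Δy)
      + (2 + Θ ^ 2) * Δy ^ 2)) ≤ Δt * (σsmin * (Δx ^ 2 * Δy ^ 2)) :=
    mul_le_mul_of_nonneg_left key hΔt0.le
  have main : 0 ≤ ε ^ 2 * Δx ^ 2 * Δy ^ 2 + σsmin * Δt * Δx ^ 2 * Δy ^ 2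
      - 2 * Θ * ε * Δt * Δx * Δy ^ 2 - 2 * Θ * ε * Δt * Δx ^ 2 * Δy
      - 2 * Δt ^ 2 * Δy ^ 2 - Δt ^ 2 * Δx * Δy / 2 - 2 * Δt ^ 2 * Δx ^ 2 := by
    nlinarith [sq_nonneg (ε * Δx * Δy - Θ * Δt * (Δx + Δy)), key2]
  nlinarith [mul_nonneg (show (0:ℝ) ≤ 2 * ε ^ 6 * Δx ^ 2 * Δy ^ 2 by positivity) main]
end

section
/- Let ε > 0, Δx, Δy > 0, Θ > 0. If 0 < Δt ≤ 2(√(9/8 + Θ²) − Θ) · ε · ΔxΔy(Δx+Δy)/(4Δx² + ΔxΔy + 4Δy²), then ε² − 2Δt(Θε/Δx + Θε/Δy + Δt/Δx² + Δt/(4ΔxΔy) + Δt/Δy²) ≥ 0. -/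
/-- hyperbolic CFL: if Δt ≤ Δt_hyp, then
ε² − 2Δt(Θε/Δx + Θε/Δy + Δt/Δx² + Δt/(4ΔxΔy) + Δt/Δy²) ≥ 0. -/
theorem stmt_6 (ε Δx Δy Θ Δt : ℝ)
    (hε : 0 < ε) (hΔx : 0 < Δx) (hΔy : 0 < Δy) (hΘ : 0 < Θ)
    (hΔt0 : 0 < Δt)
    (hΔt : Δt ≤ 2 * (Real.sqrt (9 / 8 + Θ ^ 2) - Θ) * ε *
      (Δx * Δy * (Δx + Δy) / (4 * Δx ^ 2 + Δx * Δy + 4 * Δy ^ 2))) :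
    ε ^ 2 - 2 * Δt * (Θ * ε / Δx + Θ * ε / Δy + Δt / Δx ^ 2 + Δt / (4 * Δx * Δy)
      + Δt / Δy ^ 2) ≥ 0 := by
  set s := Real.sqrt (9 / 8 + Θ ^ 2) with hs
  have hR : (0:ℝ) < 4 * Δx ^ 2 + Δx * Δy + 4 * Δy ^ 2 := by positivity
  have hs2 : s ^ 2 = 9 / 8 + Θ ^ 2 := Real.sq_sqrt (by positivity)
  have hsΘ : Θ < s := by
    nlinarith [Real.sqrt_nonneg (9 / 8 + Θ ^ 2)]
  set c := s - Θ with hc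
  have hc0 : 0 < c := by linarith
  have hcid : 8 * c ^ 2 + 16 * Θ * c = 9 := by
    have : c ^ 2 = s ^ 2 - 2 * s * Θ + Θ ^ 2 := by ring
    nlinarith [hs2]
  -- key hypothesis with denominator cleared
  have h1 : Δt * (4 * Δx ^ 2 + Δx * Δy + 4 * Δy ^ 2) ≤
      2 * c * ε * (Δx * Δy * (Δx + Δy)) := by
    have h := mul_le_mul_of_nonneg_right hΔt hR.le
    calc Δt * (4 * Δx ^ 2 + Δx * Δy + 4 * Δy ^ 2)
        ≤ (2 * c * ε * (Δx * Δy * (Δx + Δy) / (4 * Δx ^ 2 + Δx * Δy + 4 * Δy ^ 2)))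
            * (4 * Δx ^ 2 + Δx * Δy + 4 * Δy ^ 2) := h
      _ = 2 * c * ε * (Δx * Δy * (Δx + Δy)) := by field_simp
  have h2 : 9 * (Δx + Δy) ^ 2 ≤ 4 * (4 * Δx ^ 2 + Δx * Δy + 4 * Δy ^ 2) := by
    nlinarith [sq_nonneg (Δx - Δy)]
  have hu : 0 < Δt * (4 * Δx ^ 2 + Δx * Δy + 4 * Δy ^ 2) := by positivity
  have hQP : (0:ℝ) ≤ ε * (Δx * Δy * (Δx + Δy)) := by positivity
  -- main inequality with denominators cleared, multiplied by R
  have hT : (4 * (Δx * Δy) ^ 2 * ε ^ 2 - 8 * Θ * ε * (Δx * Δy) * (Δx + Δy) * Δt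
      - 2 * Δt ^ 2 * (4 * Δx ^ 2 + Δx * Δy + 4 * Δy ^ 2))
      * (4 * Δx ^ 2 + Δx * Δy + 4 * Δy ^ 2) ≥ 0 := by
    have hA1 : (Δt * (4 * Δx ^ 2 + Δx * Δy + 4 * Δy ^ 2)) * (Δt * (4 * Δx ^ 2 + Δx * Δy + 4 * Δy ^ 2))
        ≤ (2 * c * ε * (Δx * Δy * (Δx + Δy))) * (2 * c * ε * (Δx * Δy * (Δx + Δy))) :=
      mul_le_mul h1 h1 hu.le (by positivity)
    have hA2 : (8 * Θ * ε * (Δx * Δy * (Δx + Δy))) * (Δt * (4 * Δx ^ 2 + Δx * Δy + 4 * Δy ^ 2))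
        ≤ (8 * Θ * ε * (Δx * Δy * (Δx + Δy))) * (2 * c * ε * (Δx * Δy * (Δx + Δy))) :=
      mul_le_mul_of_nonneg_left h1 (by positivity)
    have h3 : (8 * Θ * ε * (Δx * Δy * (Δx + Δy))) * (2 * c * ε * (Δx * Δy * (Δx + Δy)))
        + 2 * ((2 * c * ε * (Δx * Δy * (Δx + Δy))) * (2 * c * ε * (Δx * Δy * (Δx + Δy))))
        = 9 * ε ^ 2 * (Δx * Δy) ^ 2 * (Δx + Δy) ^ 2 := by
      linear_combination (ε ^ 2 * (Δx * Δy) ^ 2 * (Δx + Δy) ^ 2) * hcid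
    have hA3 : (0:ℝ) ≤ ε ^ 2 * (Δx * Δy) ^ 2 *
        (4 * (4 * Δx ^ 2 + Δx * Δy + 4 * Δy ^ 2) - 9 * (Δx + Δy) ^ 2) :=
      mul_nonneg (by positivity) (by linarith)
    nlinarith [hA1, hA2, h3, hA3]
  have hT' : 4 * (Δx * Δy) ^ 2 * ε ^ 2 - 8 * Θ * ε * (Δx * Δy) * (Δx + Δy) * Δt
      - 2 * Δt ^ 2 * (4 * Δx ^ 2 + Δx * Δy + 4 * Δy ^ 2) ≥ 0 := by
    have hT'' : 0 ≤ (4 * Δx ^ 2 + Δx * Δy + 4 * Δy ^ 2) *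
        (4 * (Δx * Δy) ^ 2 * ε ^ 2 - 8 * Θ * ε * (Δx * Δy) * (Δx + Δy) * Δt
          - 2 * Δt ^ 2 * (4 * Δx ^ 2 + Δx * Δy + 4 * Δy ^ 2)) := by
      rw [mul_comm]; exact hT
    exact nonneg_of_mul_nonneg_right hT'' hR
  have heq : ε ^ 2 - 2 * Δt * (Θ * ε / Δx + Θ * ε / Δy + Δt / Δx ^ 2 + Δt / (4 * Δx * Δy)
      + Δt / Δy ^ 2) = (4 * (Δx * Δy) ^ 2 * ε ^ 2 - 8 * Θ * ε * (Δx * Δy) * (Δx + Δy) * Δt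
      - 2 * Δt ^ 2 * (4 * Δx ^ 2 + Δx * Δy + 4 * Δy ^ 2)) / (4 * (Δx * Δy) ^ 2) := by
    field_simp
    ring
  rw [heq]
  positivity
end

section
/- Let γ_max = ε²/(ε² + σ_s^min Δt) with ε, σ_s^min, Δt > 0, and suppose Δt ≤ max(Δt_hyp, Δt_par) where Δt_hyp = 2(√(9/8+Θ²) − Θ) ε ΔxΔy(Δx+Δy)/(4Δx²+ΔxΔy+4Δy²) and Δt_par = σ_s^min Δx²Δy²/((2+Θ²)Δx²+(1/2+2Θ²)ΔxΔy+(2+Θ²)Δy²), with Θ > 0 and Δx, Δy > 0. Then 1 − γ_max(2ΘΔt/(εΔx) + 2ΘΔt/(εΔy) + 2Δt²/(ε²Δx²) + Δt²/(2ε²ΔxΔy) + 2Δt²/(ε²Δy²)) ≥ 0. -/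
set_option maxHeartbeats 2000000


/-- Lemma 4.2 in full: condition (C7) holds whenever
Δt ≤ max(Δt_hyp, Δt_par). -/
theorem stmt_18 (ε σsmin Δx Δy Θ Δt : ℝ)
    (hε : 0 < ε) (hσ : 0 < σsmin) (hΔx : 0 < Δx) (hΔy : 0 < Δy) (hΘ : 0 < Θ)
    (hΔt0 : 0 < Δt)
    (hΔt : Δt ≤ max
      (2 * (Real.sqrt (9 / 8 + Θ ^ 2) - Θ) * ε *
        (Δx * Δy * (Δx + Δy) / (4 * Δx ^ 2 + Δx * Δy + 4 * Δy ^ 2)))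
      (σsmin * (Δx ^ 2 * Δy ^ 2 /
        ((2 + Θ ^ 2) * Δx ^ 2 + (1 / 2 + 2 * Θ ^ 2) * (Δx * Δy) + (2 + Θ ^ 2) * Δy ^ 2)))) :
    1 - ε ^ 2 / (ε ^ 2 + σsmin * Δt) *
        (2 * Θ * Δt / (ε * Δx) + 2 * Θ * Δt / (ε * Δy) + 2 * Δt ^ 2 / (ε ^ 2 * Δx ^ 2)
          + Δt ^ 2 / (2 * ε ^ 2 * Δx * Δy) + 2 * Δt ^ 2 / (ε ^ 2 * Δy ^ 2)) ≥ 0 := by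
  have hden : 0 < ε ^ 2 + σsmin * Δt := by positivity
  rw [ge_iff_le, sub_nonneg, div_mul_eq_mul_div, div_le_one hden]
  have hS : ε ^ 2 * (2 * Θ * Δt / (ε * Δx) + 2 * Θ * Δt / (ε * Δy) + 2 * Δt ^ 2 / (ε ^ 2 * Δx ^ 2)
          + Δt ^ 2 / (2 * ε ^ 2 * Δx * Δy) + 2 * Δt ^ 2 / (ε ^ 2 * Δy ^ 2))
      = (4 * Θ * Δt * ε * (Δx * Δy * (Δx + Δy)) + Δt ^ 2 * (4 * Δx ^ 2 + Δx * Δy + 4 * Δy ^ 2))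
        / (2 * Δx ^ 2 * Δy ^ 2) := by
    field_simp
    ring
  rw [hS, div_le_iff₀ (by positivity)]
  set P := Δx * Δy * (Δx + Δy) with hP
  set K := 4 * Δx ^ 2 + Δx * Δy + 4 * Δy ^ 2 with hKdef
  have hPpos : 0 < P := by positivity
  have hKpos : 0 < K := by positivity
  rcases le_max_iff.mp hΔt with h | h
  · -- hyperbolic case
    set s := Real.sqrt (9 / 8 + Θ ^ 2) with hs
    have hs2 : s ^ 2 = 9 / 8 + Θ ^ 2 := Real.sq_sqrt (by positivity)
    have hsΘ : Θ < s := by nlinarith [Real.sqrt_nonneg (9 / 8 + Θ ^ 2)]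
    have key : Δt * K ≤ 2 * (s - Θ) * ε * P := by
      rw [mul_div_assoc'] at h
      calc Δt * K ≤ (2 * (s - Θ) * ε * P / K) * K := mul_le_mul_of_nonneg_right h hKpos.le
        _ = 2 * (s - Θ) * ε * P := by field_simp
    have h1 : Δt ^ 2 * K ≤ 2 * (s - Θ) * ε * P * Δt := by
      nlinarith [mul_le_mul_of_nonneg_right key hΔt0.le]
    have h2 : 4 * Θ * Δt * ε * P + Δt ^ 2 * K ≤ 2 * (s + Θ) * ε * P * Δt := by nlinarith
    have hspos : 0 ≤ 2 * (s + Θ) * ε * P := by positivity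
    have h3 : (2 * (s + Θ) * ε * P) * (Δt * K) ≤ (2 * (s + Θ) * ε * P) * (2 * (s - Θ) * ε * P) :=
      mul_le_mul_of_nonneg_left key hspos
    have h4 : (2 * (s + Θ) * ε * P) * (2 * (s - Θ) * ε * P) = (9 / 2) * ε ^ 2 * P ^ 2 := by
      have : s ^ 2 - Θ ^ 2 = 9 / 8 := by linarith
      linear_combination 4 * ε ^ 2 * P ^ 2 * this
    have h5 : 9 * P ^ 2 ≤ 4 * Δx ^ 2 * Δy ^ 2 * K := by
      have h7 : 0 ≤ 7 * (Δx * Δy) ^ 2 * (Δx - Δy) ^ 2 := by positivity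
      rw [hP, hKdef]; nlinarith [h7]
    have h6 : (4 * Θ * Δt * ε * P + Δt ^ 2 * K) * K ≤ (2 * ε ^ 2 * Δx ^ 2 * Δy ^ 2) * K := by
      have := mul_le_mul_of_nonneg_right h2 hKpos.le
      nlinarith [this, h3, h4, h5]
    have h8 : 4 * Θ * Δt * ε * P + Δt ^ 2 * K ≤ 2 * ε ^ 2 * Δx ^ 2 * Δy ^ 2 :=
      le_of_mul_le_mul_right h6 hKpos
    nlinarith [mul_pos (mul_pos hσ hΔt0) (mul_pos (mul_pos hΔx hΔx) (mul_pos hΔy hΔy))]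
  · -- parabolic case
    set D := (2 + Θ ^ 2) * Δx ^ 2 + (1 / 2 + 2 * Θ ^ 2) * (Δx * Δy) + (2 + Θ ^ 2) * Δy ^ 2 with hDdef
    have hDpos : 0 < D := by positivity
    have key : Δt * D ≤ σsmin * (Δx ^ 2 * Δy ^ 2) := by
      rw [mul_div_assoc'] at h
      calc Δt * D ≤ (σsmin * (Δx ^ 2 * Δy ^ 2) / D) * D := mul_le_mul_of_nonneg_right h hDpos.le
        _ = σsmin * (Δx ^ 2 * Δy ^ 2) := by field_simp
    have h1 : 2 * Δt ^ 2 * D ≤ 2 * σsmin * Δt * (Δx ^ 2 * Δy ^ 2) := by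
      nlinarith [mul_le_mul_of_nonneg_right key hΔt0.le]
    have hA : 0 ≤ (ε * (Δx * Δy) - Θ * Δt * (Δx + Δy)) ^ 2 := sq_nonneg _
    rw [hP, hKdef]
    rw [hDdef] at h1
    nlinarith [hA, h1]
end
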